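/- The number of binary sequences of length (T+w)k satisfying the (T,w)-SWC constraint is at least (Σ_{i=w}^{T} C(T,i))^k: concatenating k vectors, each consisting of T bits with at least w ones followed by w ones, yields a valid (T,w)-SWC sequence, and distinct choices give distinct sequences. -/

import Mathlib

open Finset

private def swcG (T w k : ℕ) (hk : 0 < k) (f : Fin k → Finset (Fin T)) (n : ℕ) : Bool :=
  if h : n % (T + w) < T then
    decide ((⟨n % (T + w), h⟩ : Fin T) ∈ f ⟨(n / (T + w)) % k, Nat.mod_lt _ hk⟩)
  else true

private lemma swcG_block (T w k : ℕ) (hk : 0 < k) (f : Fin k → Finset (Fin T))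
    (q i : ℕ) (hi : i < T + w) :
    swcG T w k hk f (q * (T + w) + i) =
      if h : i < T then
        decide ((⟨i, h⟩ : Fin T) ∈ f ⟨q % k, Nat.mod_lt _ hk⟩)
      else true := by
  have hB : 0 < T + w := lt_of_le_of_lt (Nat.zero_le i) hi
  have hmod : (q * (T + w) + i) % (T + w) = i := by
    rw [mul_comm, Nat.mul_add_mod, Nat.mod_eq_of_lt hi]
  have hdiv : (q * (T + w) + i) / (T + w) = q := by
    rw [mul_comm, Nat.mul_add_div hB, Nat.div_eq_of_lt hi, Nat.add_zero]
  unfold swcG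
  simp only [hmod, hdiv]

private lemma forced_card (T w k : ℕ) (hw : 1 ≤ w) (hk : 0 < k) (f : Fin k → Finset (Fin T))
    (q a c : ℕ) (hTa : T ≤ a) (hac : a ≤ c) (hcB : c ≤ T + w) :
    ((Finset.Ico (q * (T + w) + a) (q * (T + w) + c)).filter
      (fun n => swcG T w k hk f n = true)).card = c - a := by
  rw [Finset.filter_true_of_mem, Nat.card_Ico]
  · omega
  · intro n hn
    rw [Finset.mem_Ico] at hn
    have hm : n = q * (T + w) + (n - q * (T + w)) := by omega
    rw [hm, swcG_block T w k hk f q _ (by omega)]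
    rw [dif_neg (by omega)]

private lemma free_card (T w k : ℕ) (hk : 0 < k) (f : Fin k → Finset (Fin T))
    (q a c : ℕ) (hac : a ≤ c) (hcT : c ≤ T) :
    (f ⟨q % k, Nat.mod_lt _ hk⟩).card - (a + (T - c)) ≤
      ((Finset.Ico (q * (T + w) + a) (q * (T + w) + c)).filter
        (fun n => swcG T w k hk f n = true)).card := by
  classical
  set Q : Fin k := ⟨q % k, Nat.mod_lt _ hk⟩
  have h1 : (f Q).card - (a + (T - c)) ≤
      ((f Q).filter (fun i : Fin T => a ≤ (i : ℕ) ∧ (i : ℕ) < c)).card := by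
    have hcompl : ((f Q).filter (fun i : Fin T => ¬(a ≤ (i : ℕ) ∧ (i : ℕ) < c))).card ≤
        a + (T - c) := by
      have : ((f Q).filter (fun i : Fin T => ¬(a ≤ (i : ℕ) ∧ (i : ℕ) < c))).card ≤
          ((Finset.range a) ∪ Finset.Ico c T).card :=
        Finset.card_le_card_of_injOn (fun i => (i : ℕ))
          (by
            intro i hi
            rw [Finset.mem_coe, Finset.mem_filter] at hi
            have := i.isLt
            simp only [Finset.mem_coe, Finset.mem_union, Finset.mem_range, Finset.mem_Ico]
            omega)
          (fun i _ j _ h => Fin.val_injective h)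
      calc _ ≤ _ := this
        _ ≤ (Finset.range a).card + (Finset.Ico c T).card := Finset.card_union_le _ _
        _ = a + (T - c) := by rw [Finset.card_range, Nat.card_Ico]
    have := Finset.card_filter_add_card_filter_not
      (s := f Q) (p := fun i : Fin T => a ≤ (i : ℕ) ∧ (i : ℕ) < c)
    omega
  refine h1.trans ?_
  refine Finset.card_le_card_of_injOn (fun i : Fin T => q * (T + w) + (i : ℕ)) ?_ ?_
  · intro i hi
    rw [Finset.mem_coe, Finset.mem_filter] at hi
    dsimp only
    rw [Finset.mem_coe, Finset.mem_filter, Finset.mem_Ico]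
    refine ⟨by omega, ?_⟩
    rw [swcG_block T w k hk f q _ (by omega), dif_pos (lt_of_lt_of_le hi.2.2 hcT)]
    simpa using hi.1
  · intro i _ j _ h
    dsimp only at h
    exact Fin.val_injective (by omega)

private lemma window_card (T w k : ℕ) (hw : 1 ≤ w) (hwT : w ≤ T) (hk : 0 < k)
    (f : Fin k → Finset (Fin T)) (hf : ∀ q, w ≤ (f q).card) (j : ℕ) :
    w ≤ ((Finset.Ico j (j + T)).filter (fun n => swcG T w k hk f n = true)).card := by
  classical
  have hB : 0 < T + w := by omega
  have hsplit : ∀ a c e : ℕ, a ≤ c → c ≤ e →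
      ((Finset.Ico a c).filter (fun n => swcG T w k hk f n = true)).card + ((Finset.Ico c e).filter (fun n => swcG T w k hk f n = true)).card
        = ((Finset.Ico a e).filter (fun n => swcG T w k hk f n = true)).card := by
    intro a c e h1 h2
    rw [← Finset.Ico_union_Ico_eq_Ico h1 h2, Finset.filter_union,
      Finset.card_union_of_disjoint
        (Finset.disjoint_filter_filter (Finset.Ico_disjoint_Ico_consecutive a c e))]
  have hmono : ∀ a c : ℕ, j ≤ a → c ≤ j + T →
      ((Finset.Ico a c).filter (fun n => swcG T w k hk f n = true)).card ≤ ((Finset.Ico j (j + T)).filter (fun n => swcG T w k hk f n = true)).card := by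
    intro a c h1 h2
    exact Finset.card_le_card (Finset.filter_subset_filter _ (Finset.Ico_subset_Ico h1 h2))
  obtain ⟨q, r, hr, hj⟩ : ∃ q r, r < T + w ∧ j = q * (T + w) + r :=
    ⟨j / (T + w), j % (T + w), Nat.mod_lt _ hB, by
      rw [mul_comm]; exact (Nat.div_add_mod j (T + w)).symm⟩
  have hq1 : (q + 1) * (T + w) = q * (T + w) + (T + w) := by ring
  set s := q * (T + w) with hs
  rcases le_or_gt r w with h1 | h1
  · -- r ≤ w : free tail of block q plus r forced ones
    have hfree := free_card T w k hk f q r T (by omega) le_rfl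
    have hforced := forced_card T w k hw hk f q T (T + r) le_rfl (by omega) (by omega)
    rw [← hs] at hfree hforced
    have hsum := hsplit (s + r) (s + T) (s + (T + r)) (by omega) (by omega)
    have hmono' := hmono (s + r) (s + (T + r)) (by omega) (by omega)
    have hfQ := hf ⟨q % k, Nat.mod_lt _ hk⟩
    omega
  · rcases le_or_gt r T with h2 | h2
    · -- w ≤ r ≤ T : the full forced run of block q is inside the window
      have hforced := forced_card T w k hw hk f q T (T + w) le_rfl (by omega) le_rfl
      rw [← hs] at hforced
      have hmono' := hmono (s + T) (s + (T + w)) (by omega) (by omega)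
      omega
    · -- T < r : tail of forced run of block q plus head of free part of block q+1
      have hforced := forced_card T w k hw hk f q r (T + w) (by omega) (by omega) le_rfl
      have hfree := free_card T w k hk f (q + 1) 0 (r - w) (by omega) (by omega)
      rw [hq1] at hfree
      rw [← hs] at hforced
      have he : s + (T + w) + 0 = s + (T + w) := by omega
      rw [he] at hfree
      have hsum := hsplit (s + r) (s + (T + w)) (s + (T + w) + (r - w)) (by omega) (by omega)
      have hmono' := hmono (s + r) (s + (T + w) + (r - w)) (by omega) (by omega)
      have hfQ := hf ⟨(q + 1) % k, Nat.mod_lt _ hk⟩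
      omega

private lemma card_ge_subsets (T w : ℕ) :
    Fintype.card {s : Finset (Fin T) // w ≤ s.card} = ∑ i ∈ Finset.Icc w T, Nat.choose T i := by
  classical
  rw [Fintype.card_subtype]
  rw [Finset.card_eq_sum_card_fiberwise (f := fun s : Finset (Fin T) => s.card)
    (t := Finset.Icc w T) (by
      intro s hs
      rw [Finset.mem_coe, Finset.mem_filter] at hs
      rw [Finset.mem_coe, Finset.mem_Icc]
      exact ⟨hs.2, (Finset.card_le_card (Finset.subset_univ s)).trans_eq (by simp)⟩)]
  refine Finset.sum_congr rfl ?_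
  intro i hi
  rw [Finset.mem_Icc] at hi
  rw [Finset.filter_filter]
  have : (Finset.univ.filter fun s : Finset (Fin T) => w ≤ s.card ∧ s.card = i)
      = Finset.univ.filter fun s : Finset (Fin T) => s.card = i := by
    apply Finset.filter_congr
    intro s _
    constructor
    · exact fun h => h.2
    · exact fun h => ⟨by omega, h⟩
  rw [this]
  have := Fintype.card_finset_len (α := Fin T) i
  rw [Fintype.card_subtype, Fintype.card_fin] at this
  exact this

/-- The number of binary sequences of length (T+w)k satisfying the (T,w)-SWC constraint is
at least (Σ_{i=w}^{T} C(T,i))^k. -/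
theorem stmt_14 (T w k : ℕ) (hw : 1 ≤ w) (hwT : w ≤ T) (hk : 1 ≤ k) :
    (∑ i ∈ Finset.Icc w T, Nat.choose T i) ^ k ≤
      Nat.card {b : Fin ((T + w) * k) → Bool //
        ∀ j : ℕ, j + T ≤ (T + w) * k →
          w ≤ (Finset.univ.filter
                (fun i : Fin ((T + w) * k) => j ≤ (i : ℕ) ∧ (i : ℕ) < j + T ∧ b i = true)).card} := by
  classical
  have hk0 : 0 < k := hk
  let G : (Fin k → {s : Finset (Fin T) // w ≤ s.card}) →
      {b : Fin ((T + w) * k) → Bool //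
        ∀ j : ℕ, j + T ≤ (T + w) * k →
          w ≤ (Finset.univ.filter
                (fun i : Fin ((T + w) * k) => j ≤ (i : ℕ) ∧ (i : ℕ) < j + T ∧ b i = true)).card} :=
    fun f => ⟨fun i => swcG T w k hk0 (fun q => (f q).1) i.val, by
      intro j hj
      beta_reduce
      have hwin := window_card T w k hw hwT hk0 (fun q => (f q).1) (fun q => (f q).2) j
      have hcard : ((Finset.Ico j (j + T)).filter
            (fun n => swcG T w k hk0 (fun q => (f q).1) n = true)).card
          = (Finset.univ.filter
              (fun i : Fin ((T + w) * k) => j ≤ (i : ℕ) ∧ (i : ℕ) < j + T ∧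
                swcG T w k hk0 (fun q => (f q).1) (i : ℕ) = true)).card := by
        refine Finset.card_bij (fun n hn => (⟨n, by
          rw [Finset.mem_filter, Finset.mem_Ico] at hn; omega⟩ : Fin ((T + w) * k))) ?_ ?_ ?_
        · intro n hn
          rw [Finset.mem_filter, Finset.mem_Ico] at hn
          simp only [Finset.mem_filter, Finset.mem_univ, true_and]
          exact ⟨hn.1.1, hn.1.2, hn.2⟩
        · intro a ha b hb h
          simpa using congrArg Fin.val h
        · intro b hb
          simp only [Finset.mem_filter, Finset.mem_univ, true_and] at hb
          refine ⟨(b : ℕ), ?_, rfl⟩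
          rw [Finset.mem_filter, Finset.mem_Ico]
          exact ⟨⟨hb.1, hb.2.1⟩, hb.2.2⟩
      omega⟩
  have hGinj : Function.Injective G := by
    intro f1 f2 h
    have hfun : ∀ i : Fin ((T + w) * k),
        swcG T w k hk0 (fun q => (f1 q).1) i.val = swcG T w k hk0 (fun q => (f2 q).1) i.val :=
      fun i => congrFun (congrArg Subtype.val h) i
    funext q
    apply Subtype.ext
    apply Finset.ext
    intro i
    have hlt : (q : ℕ) * (T + w) + (i : ℕ) < (T + w) * k := by
      have h1 : (q : ℕ) + 1 ≤ k := q.isLt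
      have h2 : (q : ℕ) * (T + w) + (i : ℕ) < ((q : ℕ) + 1) * (T + w) := by
        have := i.isLt; nlinarith
      calc (q : ℕ) * (T + w) + (i : ℕ) < ((q : ℕ) + 1) * (T + w) := h2
        _ ≤ k * (T + w) := Nat.mul_le_mul_right _ h1
        _ = (T + w) * k := mul_comm _ _
    have := hfun ⟨(q : ℕ) * (T + w) + (i : ℕ), hlt⟩
    simp only at this
    rw [swcG_block T w k hk0 (fun q => (f1 q).1) q i (by omega),
        swcG_block T w k hk0 (fun q => (f2 q).1) q i (by omega)] at this
    rw [dif_pos i.isLt, dif_pos i.isLt] at this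
    have hQ : (⟨(q : ℕ) % k, Nat.mod_lt _ hk0⟩ : Fin k) = q :=
      Fin.ext (Nat.mod_eq_of_lt q.isLt)
    have hI : (⟨(i : ℕ), i.isLt⟩ : Fin T) = i := rfl
    rw [hQ, hI] at this
    exact decide_eq_decide.mp this
  calc (∑ i ∈ Finset.Icc w T, Nat.choose T i) ^ k
      = Fintype.card {s : Finset (Fin T) // w ≤ s.card} ^ k := by rw [card_ge_subsets]
    _ = Nat.card (Fin k → {s : Finset (Fin T) // w ≤ s.card}) := by
        rw [Nat.card_eq_fintype_card, Fintype.card_fun, Fintype.card_fin]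
    _ ≤ _ := Nat.card_le_card_of_injective G hGinj
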